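/- The set of all covectors of a finite arrangement of closed half-spaces through the origin in ℝ³ satisfies axiom (CV2): it is closed under composition. That is, if X and Y are sign vectors arising as (sign(⟨v, n_e⟩))_{e∈E} for points v, w on the unit sphere, then X ∘ Y also arises from some point on the unit sphere. -/

import Mathlib

/-- Composition of sign vectors: `(X ∘ Y)_e = X_e` if `X_e ≠ 0`, else `Y_e`. -/
noncomputable def svComp {E : Type*} (X Y : E → ℝ) : E → ℝ :=
  fun e => if X e ≠ 0 then X e else Y e

/-- The covector of a point `v` w.r.t. a family of oriented central planes with
normals `n e`. -/
noncomputable def covec {E : Type*} (n : E → EuclideanSpace ℝ (Fin 3))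
    (v : EuclideanSpace ℝ (Fin 3)) : E → ℝ :=
  fun e => Real.sign (inner ℝ v (n e))

lemma sign_pos_mul {c x : ℝ} (hc : 0 < c) : Real.sign (c * x) = Real.sign x := by
  rcases lt_trichotomy x 0 with h | h | h
  · rw [Real.sign_of_neg h, Real.sign_of_neg (mul_neg_of_pos_of_neg hc h)]
  · simp [h, Real.sign_zero]
  · rw [Real.sign_of_pos h, Real.sign_of_pos (mul_pos hc h)]

/-- (CV2) for realizable covectors: the composition of the covectors of two
points of the unit sphere is again the covector of a point of the unit sphere. -/
theorem covector_composition_realizable {E : Type*} [Fintype E]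
    (n : E → EuclideanSpace ℝ (Fin 3)) (hn : ∀ e, n e ≠ 0)
    (v w : EuclideanSpace ℝ (Fin 3)) (hv : ‖v‖ = 1) (hw : ‖w‖ = 1) :
    ∃ z : EuclideanSpace ℝ (Fin 3), ‖z‖ = 1 ∧
      covec n z = svComp (covec n v) (covec n w) := by
  set f : E → ℝ := fun e => inner ℝ v (n e) with hf
  set g : E → ℝ := fun e => inner ℝ w (n e) with hg
  -- eventually in ε → 0⁺, all sign conditions hold
  have key : ∀ᶠ ε in nhdsWithin (0:ℝ) (Set.Ioi 0), ∀ e : E,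
      Real.sign (f e + ε * g e) = svComp (covec n v) (covec n w) e := by
    rw [Filter.eventually_all]
    intro e
    have hXe : covec n v e = Real.sign (f e) := rfl
    have hYe : covec n w e = Real.sign (g e) := rfl
    rcases lt_trichotomy (f e) 0 with h | h | h
    · have hcont : Filter.Tendsto (fun ε : ℝ => f e + ε * g e)
          (nhdsWithin 0 (Set.Ioi 0)) (nhds (f e)) := by
        have : Filter.Tendsto (fun ε : ℝ => f e + ε * g e) (nhds 0) (nhds (f e + 0 * g e)) := by
          exact Filter.Tendsto.const_add _ ((continuous_id.mul continuous_const).tendsto 0)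
        simpa using this.mono_left nhdsWithin_le_nhds
      have hev := hcont.eventually (eventually_lt_nhds h)
      filter_upwards [hev] with ε hε
      rw [Real.sign_of_neg hε, svComp, hXe, Real.sign_of_neg h]
      simp [Real.sign_of_neg h]
    · filter_upwards [self_mem_nhdsWithin] with ε (hε : ε ∈ Set.Ioi 0)
      rw [svComp, hXe, hYe, h, Real.sign_zero]
      simp only [ne_eq, not_true_eq_false, if_false, h, zero_add]
      exact sign_pos_mul hε
    · have hcont : Filter.Tendsto (fun ε : ℝ => f e + ε * g e)
          (nhdsWithin 0 (Set.Ioi 0)) (nhds (f e)) := by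
        have : Filter.Tendsto (fun ε : ℝ => f e + ε * g e) (nhds 0) (nhds (f e + 0 * g e)) := by
          exact Filter.Tendsto.const_add _ ((continuous_id.mul continuous_const).tendsto 0)
        simpa using this.mono_left nhdsWithin_le_nhds
      have hev := hcont.eventually (eventually_gt_nhds h)
      filter_upwards [hev] with ε hε
      rw [Real.sign_of_pos hε, svComp, hXe]
      simp [Real.sign_of_pos h]
  have small : ∀ᶠ ε in nhdsWithin (0:ℝ) (Set.Ioi 0), ε < 1 := by
    have : ∀ᶠ ε in nhds (0:ℝ), ε < 1 := eventually_lt_nhds one_pos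
    exact this.filter_mono nhdsWithin_le_nhds
  have hne : (nhdsWithin (0:ℝ) (Set.Ioi 0)).NeBot := nhdsGT_neBot 0
  obtain ⟨ε, hεkey, hεsmall, hεmem⟩ := (key.and (small.and self_mem_nhdsWithin)).exists
  have hεpos : 0 < ε := hεmem
  -- v + ε w ≠ 0
  have hvw : v + ε • w ≠ 0 := by
    intro h0
    have : ‖v‖ = ‖ε • w‖ := by
      have : v = -(ε • w) := by linear_combination (norm := abel_nf) h0
      rw [this, norm_neg]
    rw [hv, norm_smul, hw, mul_one, Real.norm_eq_abs, abs_of_pos hεpos] at this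
    linarith
  refine ⟨‖v + ε • w‖⁻¹ • (v + ε • w), ?_, ?_⟩
  · rw [norm_smul, norm_inv, norm_norm, inv_mul_cancel₀ (norm_ne_zero_iff.mpr hvw)]
  · funext e
    have hinner : (inner ℝ (‖v + ε • w‖⁻¹ • (v + ε • w)) (n e) : ℝ)
        = ‖v + ε • w‖⁻¹ * (f e + ε * g e) := by
      rw [real_inner_smul_left, inner_add_left, real_inner_smul_left]
    have hcpos : 0 < ‖v + ε • w‖⁻¹ := inv_pos.mpr (norm_pos_iff.mpr hvw)
    show Real.sign _ = _
    rw [hinner, sign_pos_mul hcpos]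
    exact hεkey e
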